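/- Fix a discretization as in the context and let g ≡ 1 be the constant-one sinogram on S. Then for every i,j ∈ {0,…,N_x−1} with ‖x_ij‖ ≤ 1 − δ_s/2 and every x in the interior of X_ij, the pixel-driven backprojection is exact: (R^pd* g)(x) = π = (R* g)(x_ij). Equivalently, Σ_{q=0}^{N_φ−1} |Φ_q| · Σ_{p=0}^{N_s−1} δ_s · w^pd(x_ij·θ_{φ_q} − s_p) = π. -/

import Mathlib

open MeasureTheory Real Set Filter

/-- The ray-driven weight function `w^rd(φ, t)` (for spatial resolution `δx`).
Here `κ(φ) = min{1/|cos φ|, 1/|sin φ|}` (with `1/0 = ∞`) is expressed as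
`1 / max |cos φ| |sin φ|`, which is the same real number. -/
noncomputable def rayWeight (δx φ t : ℝ) : ℝ :=
  (1 / δx) *
    (if δx / 2 * |(|Real.cos φ| - |Real.sin φ|)| ≤ |t| ∧
        |t| < δx / 2 * (|Real.cos φ| + |Real.sin φ|) then
      (δx / 2 * (|Real.cos φ| + |Real.sin φ|) - |t|) / (δx * |Real.cos φ * Real.sin φ|)
    else if |t| < δx / 2 * |(|Real.cos φ| - |Real.sin φ|)| then
      1 / max |Real.cos φ| |Real.sin φ|
    else if (φ = 0 ∨ φ = Real.pi / 2) ∧ |t| = δx / 2 * (|Real.cos φ| + |Real.sin φ|) then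
      1 / 2
    else 0)

/-- The pixel-driven weight function `w^pd(t)` (for detector resolution `δs`). -/
noncomputable def pixelWeight (δs t : ℝ) : ℝ := (1 / δs ^ 2) * max (δs - |t|) 0

/-- Spatial pixel center `x_ij` for an `Nx × Nx` grid on `[-1,1]²` (so `δ_x = 2/Nx`). -/
noncomputable def xc (Nx : ℕ) (i j : Fin Nx) : ℝ × ℝ :=
  (((i : ℝ) + 1 / 2) * (2 / (Nx : ℝ)) - 1, ((j : ℝ) + 1 / 2) * (2 / (Nx : ℝ)) - 1)

/-- Spatial pixel `X_ij = x_ij + [-δ_x/2, δ_x/2]²`. -/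
noncomputable def Xpix (Nx : ℕ) (i j : Fin Nx) : Set (ℝ × ℝ) :=
  {y | |y.1 - (xc Nx i j).1| ≤ (2 / (Nx : ℝ)) / 2 ∧ |y.2 - (xc Nx i j).2| ≤ (2 / (Nx : ℝ)) / 2}

/-- Detector pixel center `s_p = (p + 1/2) δ_s - 1` with `δ_s = 2/Ns`. -/
noncomputable def sc (Ns p : ℕ) : ℝ := ((p : ℝ) + 1 / 2) * (2 / (Ns : ℝ)) - 1

/-- Detector pixel `S_p = [s_p - δ_s/2, s_p + δ_s/2)`. -/
noncomputable def Spix (Ns : ℕ) (p : Fin Ns) : Set ℝ :=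
  Set.Ico (sc Ns p - (2 / (Ns : ℝ)) / 2) (sc Ns p + (2 / (Ns : ℝ)) / 2)

/-- The successor angle `φ_{q+1}`, with the convention `φ_{N_φ} = φ_0 + π`. -/
noncomputable def angNext {Nφ : ℕ} (ang : Fin Nφ → ℝ) (q : Fin Nφ) : ℝ :=
  if h : (q : ℕ) + 1 < Nφ then ang ⟨(q : ℕ) + 1, h⟩ else ang ⟨0, q.pos⟩ + Real.pi

/-- The predecessor angle `φ_{q-1}`, with the convention `φ_{-1} = φ_{N_φ-1} - π`. -/
noncomputable def angPrev {Nφ : ℕ} (ang : Fin Nφ → ℝ) (q : Fin Nφ) : ℝ :=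
  if (q : ℕ) = 0 then ang ⟨Nφ - 1, Nat.sub_lt q.pos Nat.one_pos⟩ - Real.pi
  else ang ⟨(q : ℕ) - 1, lt_of_le_of_lt (Nat.sub_le _ _) q.isLt⟩

/-- Left endpoint `(φ_{q-1} + φ_q)/2` of the angular pixel `Φ_q`. -/
noncomputable def phiLo {Nφ : ℕ} (ang : Fin Nφ → ℝ) (q : Fin Nφ) : ℝ :=
  (angPrev ang q + ang q) / 2

/-- Right endpoint `(φ_q + φ_{q+1})/2` of the angular pixel `Φ_q`. -/
noncomputable def phiHi {Nφ : ℕ} (ang : Fin Nφ → ℝ) (q : Fin Nφ) : ℝ :=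
  (ang q + angNext ang q) / 2

/-- The length `|Φ_q|` of the angular pixel `Φ_q`. -/
noncomputable def phiLen {Nφ : ℕ} (ang : Fin Nφ → ℝ) (q : Fin Nφ) : ℝ :=
  phiHi ang q - phiLo ang q

/-- The angular pixel `Φ_q = [(φ_{q-1}+φ_q)/2, (φ_q+φ_{q+1})/2)`, π-periodically
projected into `[0, π)`. -/
noncomputable def PhiSet {Nφ : ℕ} (ang : Fin Nφ → ℝ) (q : Fin Nφ) : Set ℝ :=
  {φ | φ ∈ Set.Ico 0 Real.pi ∧
    ∃ k : ℤ, φ + (k : ℝ) * Real.pi ∈ Set.Ico (phiLo ang q) (phiHi ang q)}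

/-- `x · θ_φ`, the projection of the point `x` onto the detector direction `θ_φ`. -/
noncomputable def proj (x : ℝ × ℝ) (φ : ℝ) : ℝ := x.1 * Real.cos φ + x.2 * Real.sin φ

/-- The spatial domain `Ω = B(0,1) ⊂ ℝ²`. -/
noncomputable def Omg : Set (ℝ × ℝ) := {x | x.1 ^ 2 + x.2 ^ 2 < 1}

/-- The sinogram domain `S = [0, π) × (-1, 1)`, with coordinates `(φ, s)`. -/
noncomputable def Sdom : Set (ℝ × ℝ) := Set.Ico 0 Real.pi ×ˢ Set.Ioo (-1 : ℝ) 1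

/-- The convolutional Radon transform `R_ω` with weight function `ω`. -/
noncomputable def convRadon (Nx Ns : ℕ) {Nφ : ℕ} (ang : Fin Nφ → ℝ)
    (ω : ℝ → ℝ → ℝ) (f : ℝ × ℝ → ℝ) (y : ℝ × ℝ) : ℝ :=
  ∑ q : Fin Nφ, ∑ p : Fin Ns,
    Set.indicator (PhiSet ang q ×ˢ Spix Ns p) (fun _ => (1 : ℝ)) y *
      ∑ i : Fin Nx, ∑ j : Fin Nx,
        ω (ang q) (proj (xc Nx i j) (ang q) - sc Ns (p : ℕ)) * ∫ x in Xpix Nx i j, f x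

/-- The convolutional backprojection `R_ω^*` with weight function `ω`. -/
noncomputable def convBack (Nx Ns : ℕ) {Nφ : ℕ} (ang : Fin Nφ → ℝ)
    (ω : ℝ → ℝ → ℝ) (g : ℝ × ℝ → ℝ) (x : ℝ × ℝ) : ℝ :=
  ∑ i : Fin Nx, ∑ j : Fin Nx,
    Set.indicator (Xpix Nx i j) (fun _ => (1 : ℝ)) x *
      ∑ q : Fin Nφ, ∑ p : Fin Ns,
        ω (ang q) (proj (xc Nx i j) (ang q) - sc Ns (p : ℕ)) *
          ∫ z in PhiSet ang q ×ˢ Spix Ns p, g z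

/-- The Radon transform `(Rf)(φ,s) = ∫ f(s θ_φ + t θ_φ^⊥) dt`, as a function of
`y = (φ, s)`. -/
noncomputable def radonT (f : ℝ × ℝ → ℝ) (y : ℝ × ℝ) : ℝ :=
  ∫ t : ℝ, f (y.2 * Real.cos y.1 - t * Real.sin y.1, y.2 * Real.sin y.1 + t * Real.cos y.1)

/-- The backprojection `(R^* g)(x) = ∫₀^π g(φ, x · θ_φ) dφ`. -/
noncomputable def radonAdj (g : ℝ × ℝ → ℝ) (x : ℝ × ℝ) : ℝ :=
  ∫ φ in (0 : ℝ)..Real.pi, g (φ, proj x φ)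


section Helpers

lemma hat_sum (N : ℕ) (u : ℝ) (hu0 : 0 ≤ u) (huN : u ≤ (N : ℝ) - 1) :
    ∑ p : Fin N, max (1 - |u - (p : ℝ)|) 0 = 1 := by
  rw [Fin.sum_univ_eq_sum_range (fun p => max (1 - |u - (p : ℝ)|) 0) N]
  set m := ⌊u⌋₊ with hm
  have hmu : (m : ℝ) ≤ u := Nat.floor_le hu0
  have hum : u < (m : ℝ) + 1 := Nat.lt_floor_add_one u
  have hmN : m < N := by
    have h1 : (m : ℝ) < (N : ℝ) := by linarith
    exact_mod_cast h1
  by_cases hc : m + 1 < N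
  · have hsub : ({m, m + 1} : Finset ℕ) ⊆ Finset.range N := by
      intro p hp; simp at hp; rcases hp with h | h <;> simp [h] <;> omega
    rw [← Finset.sum_subset hsub]
    · rw [Finset.sum_pair (by omega : m ≠ m + 1)]
      have h1 : |u - (m : ℝ)| = u - m := by rw [abs_of_nonneg]; linarith
      push_cast
      have h2 : |u - ((m : ℝ) + 1)| = (m : ℝ) + 1 - u := by
        rw [abs_of_nonpos (by linarith)]; ring
      rw [h1, h2, max_eq_left (by linarith), max_eq_left (by linarith)]
      ring
    · intro p hp hnp
      simp at hnp
      have : (1:ℝ) ≤ |u - (p:ℝ)| := by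
        rcases lt_or_gt_of_ne (fun h : p = m => hnp.1 h) with h | h
        · have hple : (p : ℝ) + 1 ≤ (m : ℝ) := by exact_mod_cast h
          rw [abs_of_nonneg (by linarith)]; linarith
        · have hpge : (m : ℝ) + 2 ≤ (p : ℝ) := by
            exact_mod_cast (by omega : m + 2 ≤ p)
          rw [abs_of_nonpos (by linarith)]; linarith
      exact max_eq_right (by linarith)
  · have hNm : N = m + 1 := by omega
    have hu : u = (m : ℝ) := by
      have : (N : ℝ) = (m : ℝ) + 1 := by exact_mod_cast hNm
      linarith
    rw [Finset.sum_eq_single_of_mem m (Finset.mem_range.mpr hmN)]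
    · simp [hu]
    · intro p hp hnp
      have : (1:ℝ) ≤ |u - (p:ℝ)| := by
        have hpm : p < m := by simp at hp; omega
        have hple : (p : ℝ) + 1 ≤ (m : ℝ) := by exact_mod_cast hpm
        rw [hu, abs_of_nonneg (by linarith)]; linarith
      exact max_eq_right (by linarith)

lemma det_sum (Ns : ℕ) (hNs : 0 < Ns) (t : ℝ) (ht : |t| ≤ 1 - (2 / (Ns : ℝ)) / 2) :
    ∑ p : Fin Ns, (2 / (Ns : ℝ)) * pixelWeight (2 / (Ns : ℝ)) (t - sc Ns p) = 1 := by
  have hδ : 0 < 2 / (Ns : ℝ) := by positivity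
  set δ := 2 / (Ns : ℝ) with hδdef
  set u := (t + 1) / δ - 1 / 2 with hu
  have hδu : ∀ p : ℕ, t - sc Ns p = δ * (u - p) := by
    intro p
    rw [hu, sc, ← hδdef]
    field_simp
    ring
  have key : ∀ p : Fin Ns, δ * pixelWeight δ (t - sc Ns p) = max (1 - |u - (p : ℝ)|) 0 := by
    intro p
    rw [pixelWeight, hδu p, abs_mul, abs_of_pos hδ]
    have h1 : δ - δ * |u - (p:ℝ)| = δ * (1 - |u - (p:ℝ)|) := by ring
    rw [h1]
    rw [show (0:ℝ) = δ * 0 by ring, ← mul_max_of_nonneg _ _ hδ.le]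
    field_simp
    ring
  simp_rw [key]
  apply hat_sum
  · rw [hu]
    have h1 : -(1 - δ/2) ≤ t := by
      have := abs_le.mp ht; linarith [this.1]
    rw [le_sub_iff_add_le, le_div_iff₀ hδ]
    linarith
  · rw [hu]
    have h2 : t ≤ 1 - δ/2 := (abs_le.mp ht).2
    have hNδ : (Ns : ℝ) = 2 / δ := by
      rw [hδdef]; field_simp
    rw [hNδ, sub_le_iff_le_add, div_le_iff₀ hδ]
    have : (2 / δ - 1 + 1/2) * δ = 2 - δ/2 := by field_simp; ring
    rw [this]; linarith

lemma proj_bound (x : ℝ × ℝ) (φ : ℝ) : |proj x φ| ≤ Real.sqrt (x.1 ^ 2 + x.2 ^ 2) := by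
  have h1 := Real.sq_sqrt (show (0:ℝ) ≤ x.1^2 + x.2^2 by positivity)
  have h2 := Real.sqrt_nonneg (x.1^2 + x.2^2)
  have h3 := Real.sin_sq_add_cos_sq φ
  rw [abs_le, proj]
  constructor <;> nlinarith [sq_nonneg (x.1 * Real.sin φ - x.2 * Real.cos φ),
    sq_nonneg (Real.sqrt (x.1^2 + x.2^2) + (x.1 * Real.cos φ + x.2 * Real.sin φ)),
    sq_nonneg (Real.sqrt (x.1^2 + x.2^2) - (x.1 * Real.cos φ + x.2 * Real.sin φ))]

lemma interior_strict {Nx : ℕ} {i j : Fin Nx} {x : ℝ × ℝ}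
    (hx : x ∈ interior (Xpix Nx i j)) :
    |x.1 - (xc Nx i j).1| < (2 / (Nx : ℝ)) / 2 ∧ |x.2 - (xc Nx i j).2| < (2 / (Nx : ℝ)) / 2 := by
  set δ := 2 / (Nx : ℝ) with hδdef
  set c1 := (xc Nx i j).1
  set c2 := (xc Nx i j).2
  have hset : Xpix Nx i j = Set.Icc (c1 - δ/2) (c1 + δ/2) ×ˢ Set.Icc (c2 - δ/2) (c2 + δ/2) := by
    ext y
    simp only [Xpix, mem_setOf_eq, Set.mem_prod, Set.mem_Icc, abs_le]
    constructor <;> rintro ⟨⟨a1, a2⟩, b1, b2⟩ <;>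
      exact ⟨⟨by linarith, by linarith⟩, by linarith, by linarith⟩
  rw [hset, interior_prod_eq, interior_Icc, interior_Icc] at hx
  obtain ⟨⟨ha1, ha2⟩, hb1, hb2⟩ := hx
  constructor <;> rw [abs_lt] <;> constructor <;> linarith

lemma not_mem_other {Nx : ℕ} {i j i' j' : Fin Nx} {x : ℝ × ℝ} (hNx : 0 < Nx)
    (hx : x ∈ interior (Xpix Nx i j)) (hne : ¬(i' = i ∧ j' = j)) :
    x ∉ Xpix Nx i' j' := by
  have hδ : 0 < 2 / (Nx : ℝ) := by positivity
  obtain ⟨h1, h2⟩ := interior_strict hx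
  intro hmem
  obtain ⟨g1, g2⟩ := hmem
  set δ := 2 / (Nx : ℝ)
  have key : ∀ a b : Fin Nx, a ≠ b →
      δ ≤ |(((a:ℕ):ℝ) + 1/2) * δ - 1 - ((((b:ℕ):ℝ) + 1/2) * δ - 1)| := by
    intro a b hab
    have : (((a:ℕ):ℝ) + 1/2) * δ - 1 - ((((b:ℕ):ℝ) + 1/2) * δ - 1)
        = (((a:ℕ):ℝ) - ((b:ℕ):ℝ)) * δ := by ring
    rw [this, abs_mul, abs_of_pos hδ]
    have : (1:ℝ) ≤ |((a:ℕ):ℝ) - ((b:ℕ):ℝ)| := by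
      rcases lt_or_gt_of_ne (fun h => hab (Fin.ext h) : (a:ℕ) ≠ (b:ℕ)) with h | h
      · have hc : ((a:ℕ):ℝ) + 1 ≤ ((b:ℕ):ℝ) := by exact_mod_cast h
        rw [abs_of_nonpos (by linarith)]; linarith
      · have hc : ((b:ℕ):ℝ) + 1 ≤ ((a:ℕ):ℝ) := by exact_mod_cast h
        rw [abs_of_nonneg (by linarith)]; linarith
    nlinarith
  rcases not_and_or.mp hne with hne' | hne'
  · have hk : δ ≤ |(xc Nx i' j').1 - (xc Nx i j).1| := key i' i hne'
    have htri := abs_sub_le (xc Nx i' j').1 x.1 (xc Nx i j).1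
    rw [abs_sub_comm (xc Nx i' j').1 x.1] at htri
    linarith
  · have hk : δ ≤ |(xc Nx i' j').2 - (xc Nx i j).2| := key j' j hne'
    have htri := abs_sub_le (xc Nx i' j').2 x.2 (xc Nx i j).2
    rw [abs_sub_comm (xc Nx i' j').2 x.2] at htri
    linarith

variable {Nφ : ℕ} (ang : Fin Nφ → ℝ)

lemma prev_lt (hmono : StrictMono ang) (hang : ∀ q, ang q ∈ Set.Ico 0 Real.pi) (q : Fin Nφ) :
    angPrev ang q < ang q := by
  unfold angPrev
  split
  · have h1 := (hang ⟨Nφ - 1, Nat.sub_lt q.pos Nat.one_pos⟩).2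
    have h2 := (hang q).1
    linarith
  · exact hmono (by rw [Fin.lt_def]; simp; omega)

lemma lt_next (hmono : StrictMono ang) (hang : ∀ q, ang q ∈ Set.Ico 0 Real.pi) (q : Fin Nφ) :
    ang q < angNext ang q := by
  unfold angNext
  split
  · exact hmono (by rw [Fin.lt_def]; simp)
  · have h1 := (hang q).2
    have h2 := (hang ⟨0, q.pos⟩).1
    linarith

lemma prev_ge (hang : ∀ q, ang q ∈ Set.Ico 0 Real.pi) (q : Fin Nφ) :
    -Real.pi ≤ angPrev ang q := by
  unfold angPrev
  have hπ := Real.pi_pos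
  split
  · have := (hang ⟨Nφ - 1, Nat.sub_lt q.pos Nat.one_pos⟩).1; linarith
  · have := (hang ⟨(q : ℕ) - 1, lt_of_le_of_lt (Nat.sub_le _ _) q.isLt⟩).1; linarith

lemma next_lt2 (hang : ∀ q, ang q ∈ Set.Ico 0 Real.pi) (q : Fin Nφ) :
    angNext ang q < 2 * Real.pi := by
  unfold angNext
  have hπ := Real.pi_pos
  split
  · have := (hang ⟨(q : ℕ) + 1, by assumption⟩).2; linarith
  · have := (hang ⟨0, q.pos⟩).2; linarith

lemma diff_le (hmono : StrictMono ang) (hang : ∀ q, ang q ∈ Set.Ico 0 Real.pi) (q : Fin Nφ) :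
    angNext ang q - angPrev ang q ≤ 2 * Real.pi := by
  have hπ := Real.pi_pos
  unfold angNext angPrev
  by_cases h1 : (q : ℕ) + 1 < Nφ <;> by_cases h2 : (q : ℕ) = 0
  · rw [dif_pos h1, if_pos h2]
    have hle : ang ⟨(q:ℕ) + 1, h1⟩ ≤ ang ⟨Nφ - 1, Nat.sub_lt q.pos Nat.one_pos⟩ :=
      hmono.monotone (by rw [Fin.le_def]; simp; omega)
    linarith
  · rw [dif_pos h1, if_neg h2]
    have ha := (hang ⟨(q:ℕ) + 1, h1⟩).2
    have hb := (hang ⟨(q:ℕ) - 1, lt_of_le_of_lt (Nat.sub_le _ _) q.isLt⟩).1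
    linarith
  · rw [dif_neg h1, if_pos h2]
    have hEq : (⟨Nφ - 1, Nat.sub_lt q.pos Nat.one_pos⟩ : Fin Nφ) = ⟨0, q.pos⟩ :=
      Fin.ext (by simp; omega)
    rw [hEq]; linarith
  · rw [dif_neg h1, if_neg h2]
    have hle : ang ⟨0, q.pos⟩ ≤ ang ⟨(q:ℕ) - 1, lt_of_le_of_lt (Nat.sub_le _ _) q.isLt⟩ :=
      hmono.monotone (by rw [Fin.le_def]; simp)
    linarith

lemma vol_mod (lo hi : ℝ) (h1 : lo < hi) (h2 : hi - lo ≤ π) (h3 : -(π/2) ≤ lo)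
    (h4 : lo < π) (h5 : 0 < hi) (h6 : hi ≤ 3*π/2) :
    volume {φ : ℝ | φ ∈ Set.Ico 0 π ∧ ∃ k : ℤ, φ + (k:ℝ)*π ∈ Set.Ico lo hi}
      = ENNReal.ofReal (hi - lo) := by
  have hπ := Real.pi_pos
  have kbound : ∀ (k : ℤ) (φ : ℝ), 0 ≤ φ → φ < π → lo ≤ φ + (k:ℝ)*π → φ + (k:ℝ)*π < hi →
      -2 < k ∧ k < 2 := by
    intro k φ hφ0 hφπ hk1 hk2
    constructor
    · by_contra h; push_neg at h
      have : (k:ℝ) ≤ -2 := by exact_mod_cast h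
      nlinarith
    · by_contra h; push_neg at h
      have : (2:ℝ) ≤ (k:ℝ) := by exact_mod_cast h
      nlinarith
  rcases lt_or_ge lo 0 with hlo | hlo
  · have hhi : hi < π := by linarith
    have hset : {φ : ℝ | φ ∈ Set.Ico 0 π ∧ ∃ k : ℤ, φ + (k:ℝ)*π ∈ Set.Ico lo hi}
        = Ico 0 hi ∪ Ico (lo+π) π := by
      ext φ
      simp only [mem_setOf_eq, mem_Ico, mem_union]
      constructor
      · rintro ⟨⟨h0, hφπ⟩, k, hk1, hk2⟩
        obtain ⟨hkl, hku⟩ := kbound k φ h0 hφπ hk1 hk2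
        interval_cases k
        · right; push_cast at hk1 hk2; constructor <;> linarith
        · left; push_cast at hk1 hk2; constructor <;> linarith
        · exfalso; push_cast at hk1 hk2; linarith
      · rintro (⟨ha, hb⟩ | ⟨ha, hb⟩)
        · exact ⟨⟨ha, by linarith⟩, 0, by push_cast; constructor <;> linarith⟩
        · exact ⟨⟨by linarith, hb⟩, -1, by push_cast; constructor <;> linarith⟩
    rw [hset, measure_union ?_ measurableSet_Ico, Real.volume_Ico, Real.volume_Ico,
      ← ENNReal.ofReal_add (by linarith) (by linarith)]
    · congr 1; ring
    · rw [Set.Ico_disjoint_Ico, min_eq_left hhi.le]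
      exact le_max_of_le_right (by linarith)
  · rcases le_or_gt hi π with hhi | hhi
    · have hset : {φ : ℝ | φ ∈ Set.Ico 0 π ∧ ∃ k : ℤ, φ + (k:ℝ)*π ∈ Set.Ico lo hi}
          = Ico lo hi := by
        ext φ
        simp only [mem_setOf_eq, mem_Ico]
        constructor
        · rintro ⟨⟨h0, hφπ⟩, k, hk1, hk2⟩
          obtain ⟨hkl, hku⟩ := kbound k φ h0 hφπ hk1 hk2
          interval_cases k
          · exfalso; push_cast at hk1 hk2; linarith
          · push_cast at hk1 hk2; constructor <;> linarith
          · exfalso; push_cast at hk1 hk2; linarith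
        · rintro ⟨ha, hb⟩
          exact ⟨⟨by linarith, by linarith⟩, 0, by push_cast; constructor <;> linarith⟩
      rw [hset, Real.volume_Ico]
    · have hlo2 : hi - π ≤ lo := by linarith
      have hset : {φ : ℝ | φ ∈ Set.Ico 0 π ∧ ∃ k : ℤ, φ + (k:ℝ)*π ∈ Set.Ico lo hi}
          = Ico 0 (hi-π) ∪ Ico lo π := by
        ext φ
        simp only [mem_setOf_eq, mem_Ico, mem_union]
        constructor
        · rintro ⟨⟨h0, hφπ⟩, k, hk1, hk2⟩
          obtain ⟨hkl, hku⟩ := kbound k φ h0 hφπ hk1 hk2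
          interval_cases k
          · exfalso; push_cast at hk1 hk2; linarith
          · right; push_cast at hk1 hk2; constructor <;> linarith
          · left; push_cast at hk1 hk2; constructor <;> linarith
        · rintro (⟨ha, hb⟩ | ⟨ha, hb⟩)
          · exact ⟨⟨ha, by linarith⟩, 1, by push_cast; constructor <;> linarith⟩
          · exact ⟨⟨by linarith, hb⟩, 0, by push_cast; constructor <;> linarith⟩
      rw [hset, measure_union ?_ measurableSet_Ico, Real.volume_Ico, Real.volume_Ico,
        ← ENNReal.ofReal_add (by linarith) (by linarith)]
      · congr 1; ring
      · rw [Set.Ico_disjoint_Ico, min_eq_left (by linarith : hi - π ≤ π)]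
        exact le_max_of_le_right hlo2

lemma vol_PhiSet (hmono : StrictMono ang) (hang : ∀ q, ang q ∈ Set.Ico 0 Real.pi) (q : Fin Nφ) :
    volume (PhiSet ang q) = ENNReal.ofReal (phiLen ang q) := by
  have hπ := Real.pi_pos
  have hp := prev_lt ang hmono hang q
  have hn := lt_next ang hmono hang q
  have hpg := prev_ge ang hang q
  have hn2 := next_lt2 ang hang q
  have hd := diff_le ang hmono hang q
  have h0 := (hang q).1
  have h1' := (hang q).2
  unfold PhiSet phiLen phiHi phiLo
  exact vol_mod _ _ (by linarith) (by linarith) (by linarith) (by linarith)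
    (by linarith) (by linarith)

lemma phiLen_nonneg (hmono : StrictMono ang) (hang : ∀ q, ang q ∈ Set.Ico 0 Real.pi)
    (q : Fin Nφ) : 0 ≤ phiLen ang q := by
  have hp := prev_lt ang hmono hang q
  have hn := lt_next ang hmono hang q
  unfold phiLen phiHi phiLo
  linarith

lemma sum_next {n : ℕ} (ang : Fin (n+1) → ℝ) :
    ∑ q, angNext ang q = (∑ q, ang q) + Real.pi := by
  rw [Fin.sum_univ_castSucc (f := fun q => angNext ang q)]
  have hlast : angNext ang (Fin.last n) = ang 0 + Real.pi := by
    unfold angNext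
    rw [dif_neg (by simp)]
    congr 1
  have hcast : ∀ i : Fin n, angNext ang i.castSucc = ang i.succ := by
    intro i
    unfold angNext
    rw [dif_pos (by simp only [Fin.coe_castSucc]; omega)]
    exact congrArg ang (Fin.ext (by simp))
  simp_rw [hcast, hlast]
  rw [Fin.sum_univ_succ (f := fun q => ang q)]
  ring

lemma sum_prev {n : ℕ} (ang : Fin (n+1) → ℝ) :
    ∑ q, angPrev ang q = (∑ q, ang q) - Real.pi := by
  rw [Fin.sum_univ_succ (f := fun q => angPrev ang q)]
  have h0 : angPrev ang 0 = ang (Fin.last n) - Real.pi := by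
    unfold angPrev
    rw [if_pos (by simp)]
    exact sub_left_inj.mpr (congrArg ang (Fin.ext (by simp)))
  have hsucc : ∀ i : Fin n, angPrev ang i.succ = ang i.castSucc := by
    intro i
    unfold angPrev
    rw [if_neg (by simp)]
    exact congrArg ang (Fin.ext (by simp))
  simp_rw [hsucc, h0]
  rw [Fin.sum_univ_castSucc (f := fun q => ang q)]
  ring

lemma sum_phiLen {n : ℕ} (ang : Fin (n+1) → ℝ) :
    ∑ q, phiLen ang q = Real.pi := by
  have hq : ∀ q : Fin (n+1), phiLen ang q = angNext ang q / 2 - angPrev ang q / 2 := by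
    intro q; unfold phiLen phiHi phiLo; ring
  simp_rw [hq]
  rw [Finset.sum_sub_distrib, ← Finset.sum_div, ← Finset.sum_div, sum_next, sum_prev]
  ring

end Helpers

/-- For a fixed discretization and the constant-one sinogram `g ≡ 1`:
for every `i, j` with `‖x_ij‖ ≤ 1 - δ_s/2` and every `x` in the interior of `X_ij`, the
pixel-driven backprojection is exact, `(R^pd* g)(x) = π = (R^* g)(x_ij)`; equivalently
`Σ_q |Φ_q| Σ_p δ_s · w^pd(x_ij · θ_q - s_p) = π`. -/
theorem stmt11 (Nx Nφ Ns : ℕ) (hNx : 0 < Nx) (hNφ : 0 < Nφ) (hNs : 0 < Ns)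
    (ang : Fin Nφ → ℝ) (hmono : StrictMono ang) (hang : ∀ q, ang q ∈ Set.Ico 0 Real.pi)
    (i j : Fin Nx)
    (hnorm : Real.sqrt ((xc Nx i j).1 ^ 2 + (xc Nx i j).2 ^ 2) ≤ 1 - (2 / (Ns : ℝ)) / 2)
    (x : ℝ × ℝ) (hx : x ∈ interior (Xpix Nx i j)) :
    convBack Nx Ns ang (fun _ t => pixelWeight (2 / (Ns : ℝ)) t) (fun _ => (1 : ℝ)) x
        = Real.pi
    ∧ radonAdj (fun _ => (1 : ℝ)) (xc Nx i j) = Real.pi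
    ∧ ∑ q : Fin Nφ, phiLen ang q *
        ∑ p : Fin Ns, (2 / (Ns : ℝ)) *
          pixelWeight (2 / (Ns : ℝ)) (proj (xc Nx i j) (ang q) - sc Ns (p : ℕ))
      = Real.pi := by
  have hπ := Real.pi_pos
  obtain ⟨n, rfl⟩ : ∃ n, Nφ = n + 1 := ⟨Nφ - 1, by omega⟩
  have hδs : (0:ℝ) < 2 / (Ns : ℝ) := by positivity
  have hproj : ∀ q : Fin (n+1), |proj (xc Nx i j) (ang q)| ≤ 1 - (2 / (Ns:ℝ)) / 2 :=
    fun q => le_trans (proj_bound _ _) hnorm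
  have hdet : ∀ q : Fin (n+1),
      ∑ p : Fin Ns, (2 / (Ns:ℝ)) * pixelWeight (2 / (Ns:ℝ))
        (proj (xc Nx i j) (ang q) - sc Ns (p : ℕ)) = 1 :=
    fun q => det_sum Ns hNs _ (hproj q)
  have key3 : ∑ q : Fin (n+1), phiLen ang q *
      ∑ p : Fin Ns, (2 / (Ns : ℝ)) *
        pixelWeight (2 / (Ns : ℝ)) (proj (xc Nx i j) (ang q) - sc Ns (p : ℕ))
      = Real.pi := by
    rw [Finset.sum_congr rfl (fun q _ => by rw [hdet q, mul_one])]
    exact sum_phiLen ang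
  refine ⟨?_, ?_, key3⟩
  · -- pixel-driven backprojection
    have hvol : ∀ (q : Fin (n+1)) (p : Fin Ns),
        (volume (PhiSet ang q ×ˢ Spix Ns p)).toReal = phiLen ang q * (2 / (Ns:ℝ)) := by
      intro q p
      rw [Measure.volume_eq_prod, Measure.prod_prod, vol_PhiSet ang hmono hang q, Spix,
        Real.volume_Ico,
        show (sc Ns p + (2/(Ns:ℝ))/2) - (sc Ns p - (2/(Ns:ℝ))/2) = 2/(Ns:ℝ) by ring,
        ← ENNReal.ofReal_mul (phiLen_nonneg ang hmono hang q)]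
      exact ENNReal.toReal_ofReal (mul_nonneg (phiLen_nonneg ang hmono hang q) hδs.le)
    simp only [convBack, setIntegral_const, smul_eq_mul, mul_one]
    rw [Finset.sum_eq_single_of_mem i (Finset.mem_univ i) ?hi]
    rw [Finset.sum_eq_single_of_mem j (Finset.mem_univ j) ?hj]
    case hi =>
      intro b _ hb
      apply Finset.sum_eq_zero
      intro j' _
      rw [Set.indicator_of_notMem (not_mem_other hNx hx (fun h => hb h.1)), zero_mul]
    case hj =>
      intro b _ hb
      rw [Set.indicator_of_notMem (not_mem_other hNx hx (fun h => hb h.2)), zero_mul]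
    rw [Set.indicator_of_mem (interior_subset hx), one_mul]
    simp_rw [measureReal_def, hvol]
    have hre : ∀ q : Fin (n+1),
        (∑ p : Fin Ns, pixelWeight (2/(Ns:ℝ)) (proj (xc Nx i j) (ang q) - sc Ns (p:ℕ)) *
          (phiLen ang q * (2/(Ns:ℝ))))
        = phiLen ang q * ∑ p : Fin Ns, (2/(Ns:ℝ)) *
            pixelWeight (2/(Ns:ℝ)) (proj (xc Nx i j) (ang q) - sc Ns (p:ℕ)) := by
      intro q
      rw [Finset.mul_sum]
      exact Finset.sum_congr rfl fun p _ => by ring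
    rw [Finset.sum_congr rfl (fun q _ => hre q)]
    exact key3
  · -- continuous backprojection
    simp [radonAdj]
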